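/- Let α be a type and θ : α → α → ℂ. For n ≥ 0 define E_n : α^{2n} → ℂ recursively by E_0 = 1 and E_n(f_1, …, f_{2n}) = Σ_{j=2}^{2n} (−1)^j θ(f_1, f_j) · E_{n−1}(f_2, …, f_{j−1}, f_{j+1}, …, f_{2n}) (the arguments f_1 and f_j are omitted). Then for every n and every tuple (f_1, …, f_{2n}): E_n(f_1, …, f_{2n}) = Σ_σ sgn(σ) Π_{k=1}^{n} θ(f_{σ(2k−1)}, f_{σ(2k)}), where the sum runs over all permutations σ of {1, …, 2n} satisfying σ(2k−1) < σ(2k) for k = 1, …, n and σ(1) < σ(3) < ⋯ < σ(2n−1), and sgn(σ) is the sign of σ. -/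

import Mathlib

open Finset

/-- The recursively defined quasi-free expansion: `E 0 = 1` and (in 1-based notation)
`E n (f₁,…,f_{2n}) = ∑_{j=2}^{2n} (-1)^j θ(f₁,f_j) · E (n-1) (f₂,…,f̌_j,…,f_{2n})`,
where the arguments `f₁` and `f_j` are omitted. -/
noncomputable def quasiFreeE {α : Type*} (θ : α → α → ℂ) :
    (n : ℕ) → (Fin (2 * n) → α) → ℂ
  | 0, _ => 1
  | n + 1, f =>
      ∑ j : Fin (2 * n + 1),
        (-1 : ℂ) ^ (j : ℕ) *
          θ (f ⟨0, by omega⟩) (f ⟨(j : ℕ) + 1, by have := j.isLt; omega⟩) *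
          quasiFreeE θ n (fun i =>
            f ⟨((j.succAbove i : Fin (2 * n + 1)) : ℕ) + 1, by
                have := (j.succAbove i).isLt; omega⟩)

section QFAux
open Equiv Equiv.Perm
lemma qf_lt_even (n : ℕ) (k : Fin n) : 2 * (k : ℕ) < 2 * n := by have := k.isLt; omega

lemma qf_lt_odd (n : ℕ) (k : Fin n) : 2 * (k : ℕ) + 1 < 2 * n := by have := k.isLt; omega

noncomputable def Phi (n : ℕ) (j : Fin (2 * n + 1)) (τ : Equiv.Perm (Fin (2 * n))) :
    Equiv.Perm (Fin (2 * n + 2)) :=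
  Equiv.Perm.decomposeFin.symm (0, (Fin.cycleRange j)⁻¹ * Equiv.Perm.decomposeFin.symm (0, τ))

lemma Phi_zero (n : ℕ) (j : Fin (2 * n + 1)) (τ : Equiv.Perm (Fin (2 * n))) :
    Phi n j τ 0 = 0 := Equiv.Perm.decomposeFin_symm_apply_zero _ _

lemma Phi_one (n : ℕ) (j : Fin (2 * n + 1)) (τ : Equiv.Perm (Fin (2 * n))) :
    Phi n j τ 1 = j.succ := by
  have h : (1 : Fin (2 * n + 2)) = (0 : Fin (2 * n + 1)).succ := rfl
  rw [Phi, h, Equiv.Perm.decomposeFin_symm_apply_succ]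
  simp only [Equiv.Perm.mul_apply, Equiv.Perm.decomposeFin_symm_apply_zero,
    ← Equiv.Perm.inv_def, swap_self, Equiv.refl_apply]
  rw [show (Fin.cycleRange j)⁻¹ = (Fin.cycleRange j).symm from rfl, Fin.cycleRange_symm_zero]

lemma Phi_succ_succ (n : ℕ) (j : Fin (2 * n + 1)) (τ : Equiv.Perm (Fin (2 * n)))
    (i : Fin (2 * n)) : Phi n j τ i.succ.succ = (j.succAbove (τ i)).succ := by
  rw [Phi, Equiv.Perm.decomposeFin_symm_apply_succ]
  simp only [Equiv.Perm.mul_apply, Equiv.Perm.decomposeFin_symm_apply_succ, swap_self,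
    Equiv.refl_apply]
  rw [show (Fin.cycleRange j)⁻¹ = (Fin.cycleRange j).symm from rfl, Fin.cycleRange_symm_succ]

lemma Phi_sign (n : ℕ) (j : Fin (2 * n + 1)) (τ : Equiv.Perm (Fin (2 * n))) :
    ((Equiv.Perm.sign (Phi n j τ) : ℤ) : ℂ) =
      (-1 : ℂ) ^ (j : ℕ) * ((Equiv.Perm.sign τ : ℤ) : ℂ) := by
  rw [Phi, Equiv.Perm.decomposeFin.symm_sign, if_pos rfl, one_mul, map_mul, map_inv,
    Equiv.Perm.decomposeFin.symm_sign, if_pos rfl, one_mul, Fin.sign_cycleRange]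
  rw [← inv_pow, show ((-1 : ℤˣ))⁻¹ = -1 by decide]
  push_cast
  ring

lemma Phi_mk_zero (n : ℕ) (j : Fin (2 * n + 1)) (τ : Equiv.Perm (Fin (2 * n)))
    (h : 0 < 2 * n + 2) : Phi n j τ ⟨0, h⟩ = 0 := by
  have : (⟨0, h⟩ : Fin (2 * n + 2)) = 0 := by apply Fin.ext; simp
  rw [this, Phi_zero]

lemma Phi_mk_one (n : ℕ) (j : Fin (2 * n + 1)) (τ : Equiv.Perm (Fin (2 * n)))
    (h : 1 < 2 * n + 2) : Phi n j τ ⟨1, h⟩ = j.succ := by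
  have : (⟨1, h⟩ : Fin (2 * n + 2)) = 1 := by apply Fin.ext; simp
  rw [this, Phi_one]

lemma Phi_mk_even (n : ℕ) (j : Fin (2 * n + 1)) (τ : Equiv.Perm (Fin (2 * n)))
    (m : Fin n) (h : 2 * ((m : ℕ) + 1) < 2 * n + 2) :
    Phi n j τ ⟨2 * ((m : ℕ) + 1), h⟩ =
      (j.succAbove (τ ⟨2 * (m : ℕ), qf_lt_even n m⟩)).succ := by
  have e : (⟨2 * ((m : ℕ) + 1), h⟩ : Fin (2 * n + 2)) =
      (⟨2 * (m : ℕ), by have := m.isLt; omega⟩ : Fin (2 * n)).succ.succ := by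
    apply Fin.ext; simp only [Fin.val_succ]; omega
  rw [e, Phi_succ_succ]

lemma Phi_mk_odd (n : ℕ) (j : Fin (2 * n + 1)) (τ : Equiv.Perm (Fin (2 * n)))
    (m : Fin n) (h : 2 * ((m : ℕ) + 1) + 1 < 2 * n + 2) :
    Phi n j τ ⟨2 * ((m : ℕ) + 1) + 1, h⟩ =
      (j.succAbove (τ ⟨2 * (m : ℕ) + 1, qf_lt_odd n m⟩)).succ := by
  have e : (⟨2 * ((m : ℕ) + 1) + 1, h⟩ : Fin (2 * n + 2)) =
      (⟨2 * (m : ℕ) + 1, by have := m.isLt; omega⟩ : Fin (2 * n)).succ.succ := by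
    apply Fin.ext; simp only [Fin.val_succ]; omega
  rw [e, Phi_succ_succ]

lemma Phi_mem (n : ℕ) (j : Fin (2 * n + 1)) (τ : Equiv.Perm (Fin (2 * n))) :
    ((∀ k : Fin (n + 1),
        Phi n j τ ⟨2 * (k : ℕ), by have := k.isLt; omega⟩ <
          Phi n j τ ⟨2 * (k : ℕ) + 1, by have := k.isLt; omega⟩) ∧
      (∀ k l : Fin (n + 1), k < l →
        Phi n j τ ⟨2 * (k : ℕ), by have := k.isLt; omega⟩ <
          Phi n j τ ⟨2 * (l : ℕ), by have := l.isLt; omega⟩)) ↔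
    ((∀ k : Fin n,
        τ ⟨2 * (k : ℕ), qf_lt_even n k⟩ <
          τ ⟨2 * (k : ℕ) + 1, qf_lt_odd n k⟩) ∧
      (∀ k l : Fin n, k < l →
        τ ⟨2 * (k : ℕ), qf_lt_even n k⟩ <
          τ ⟨2 * (l : ℕ), qf_lt_even n l⟩)) := by
  constructor
  · rintro ⟨h1, h2⟩
    constructor
    · intro m
      have := h1 m.succ
      simp only [Fin.val_succ] at this
      rwa [Phi_mk_even, Phi_mk_odd, Fin.succ_lt_succ_iff,
        Fin.succAbove_lt_succAbove_iff] at this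
    · intro k l hkl
      have := h2 k.succ l.succ (by simpa using hkl)
      simp only [Fin.val_succ] at this
      rwa [Phi_mk_even, Phi_mk_even, Fin.succ_lt_succ_iff,
        Fin.succAbove_lt_succAbove_iff] at this
  · rintro ⟨h1, h2⟩
    constructor
    · intro k
      induction k using Fin.cases with
      | zero =>
        simp only [Fin.val_zero, Nat.mul_zero]
        rw [Phi_mk_zero, Phi_mk_one]
        exact Fin.succ_pos j
      | succ m =>
        simp only [Fin.val_succ]
        rw [Phi_mk_even, Phi_mk_odd, Fin.succ_lt_succ_iff,
          Fin.succAbove_lt_succAbove_iff]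
        exact h1 m
    · intro k l hkl
      induction l using Fin.cases with
      | zero => exact absurd hkl (by simp)
      | succ m =>
        induction k using Fin.cases with
        | zero =>
          simp only [Fin.val_zero, Nat.mul_zero, Fin.val_succ]
          rw [Phi_mk_zero, Phi_mk_even]
          exact Fin.succ_pos _
        | succ m' =>
          simp only [Fin.val_succ]
          rw [Phi_mk_even, Phi_mk_even, Fin.succ_lt_succ_iff,
            Fin.succAbove_lt_succAbove_iff]
          exact h2 m' m (by simpa using hkl)

lemma Phi_surj (n : ℕ) (σ : Equiv.Perm (Fin (2 * n + 2)))
    (hc : (∀ k : Fin (n + 1),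
        σ ⟨2 * (k : ℕ), by have := k.isLt; omega⟩ <
          σ ⟨2 * (k : ℕ) + 1, by have := k.isLt; omega⟩) ∧
      (∀ k l : Fin (n + 1), k < l →
        σ ⟨2 * (k : ℕ), by have := k.isLt; omega⟩ <
          σ ⟨2 * (l : ℕ), by have := l.isLt; omega⟩)) :
    ∃ (j : Fin (2 * n + 1)) (τ : Equiv.Perm (Fin (2 * n))), Phi n j τ = σ := by
  -- σ 0 = 0
  have h0 : σ 0 = 0 := by
    by_contra h
    set m := σ.symm 0 with hmdef
    have hm : σ m = 0 := σ.apply_symm_apply 0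
    have hmne : m ≠ 0 := fun e => h (by rw [e] at hm; exact hm)
    have hv := m.isLt
    obtain ⟨q, hq⟩ : ∃ q, (m : ℕ) = 2 * q ∨ (m : ℕ) = 2 * q + 1 := ⟨(m : ℕ) / 2, by omega⟩
    rcases hq with hq | hq
    · have hqn : q < n + 1 := by omega
      have hq0 : 0 < q := by
        rcases Nat.eq_zero_or_pos q with h' | h'
        · exact absurd (Fin.ext (by simp only [Fin.val_zero]; omega) : m = 0) hmne
        · exact h'
      have := hc.2 ⟨0, by omega⟩ ⟨q, hqn⟩ (by exact hq0)
      have hme : (⟨2 * ((⟨q, hqn⟩ : Fin (n + 1)) : ℕ), by omega⟩ : Fin (2 * n + 2)) = m :=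
        Fin.ext (by simpa using hq.symm)
      rw [hme, hm] at this
      exact absurd this (by simp)
    · have hqn : q < n + 1 := by omega
      have := hc.1 ⟨q, hqn⟩
      have hme : (⟨2 * ((⟨q, hqn⟩ : Fin (n + 1)) : ℕ) + 1, by omega⟩ : Fin (2 * n + 2)) = m :=
        Fin.ext (by simpa using hq.symm)
      rw [hme, hm] at this
      exact absurd this (by simp)
  -- reconstruction
  set σ' := (Equiv.Perm.decomposeFin σ).2 with hσ'
  have hdec : Equiv.Perm.decomposeFin.symm ((Equiv.Perm.decomposeFin σ).1, σ') = σ := by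
    rw [hσ']
    exact Equiv.symm_apply_apply _ _
  have h1 : (Equiv.Perm.decomposeFin σ).1 = 0 := by
    have := Equiv.Perm.decomposeFin_symm_apply_zero (Equiv.Perm.decomposeFin σ).1 σ'
    rw [hdec] at this
    rw [← this]; exact h0
  set j := σ' 0 with hj
  set ρ := j.cycleRange * σ' with hρ
  have hρ0 : ρ 0 = 0 := by
    rw [hρ]
    simp only [Equiv.Perm.mul_apply, ← hj, Fin.cycleRange_self]
  set τ := (Equiv.Perm.decomposeFin ρ).2 with hτ
  have hdecρ : Equiv.Perm.decomposeFin.symm ((Equiv.Perm.decomposeFin ρ).1, τ) = ρ := by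
    rw [hτ]
    exact Equiv.symm_apply_apply _ _
  have h1ρ : (Equiv.Perm.decomposeFin ρ).1 = 0 := by
    have := Equiv.Perm.decomposeFin_symm_apply_zero (Equiv.Perm.decomposeFin ρ).1 τ
    rw [hdecρ] at this
    rw [← this]; exact hρ0
  refine ⟨j, τ, ?_⟩
  rw [Phi, ← h1ρ, hdecρ, hρ]
  rw [show (Fin.cycleRange j)⁻¹ * (j.cycleRange * σ') = σ' by group]
  rw [← h1]
  exact hdec

lemma Phi_term_eq {α : Type*} (θ : α → α → ℂ) (n : ℕ) (f : Fin (2 * n + 2) → α)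
    (j : Fin (2 * n + 1)) (τ : Equiv.Perm (Fin (2 * n))) :
    (-1 : ℂ) ^ (j : ℕ) * θ (f ⟨0, by omega⟩) (f ⟨(j : ℕ) + 1, by have := j.isLt; omega⟩) *
      (((Equiv.Perm.sign τ : ℤ) : ℂ) *
        ∏ k : Fin n,
          θ (f ⟨((j.succAbove (τ ⟨2 * (k : ℕ), qf_lt_even n k⟩) : Fin (2 * n + 1)) : ℕ) + 1,
                by have := (j.succAbove (τ ⟨2 * (k : ℕ), qf_lt_even n k⟩)).isLt; omega⟩)
            (f ⟨((j.succAbove (τ ⟨2 * (k : ℕ) + 1, qf_lt_odd n k⟩) : Fin (2 * n + 1)) : ℕ) + 1,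
                by have := (j.succAbove (τ ⟨2 * (k : ℕ) + 1, qf_lt_odd n k⟩)).isLt; omega⟩))
    = ((Equiv.Perm.sign (Phi n j τ) : ℤ) : ℂ) *
        ∏ k : Fin (n + 1),
          θ (f (Phi n j τ ⟨2 * (k : ℕ), by have := k.isLt; omega⟩))
            (f (Phi n j τ ⟨2 * (k : ℕ) + 1, by have := k.isLt; omega⟩)) := by
  have hs : ∀ (x : Fin (2 * n + 1)) (h : (x : ℕ) + 1 < 2 * n + 2),
      (⟨(x : ℕ) + 1, h⟩ : Fin (2 * n + 2)) = x.succ := fun x h => rfl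
  have h0 : (⟨0, by omega⟩ : Fin (2 * n + 2)) = 0 := by apply Fin.ext; simp
  rw [Phi_sign, Fin.prod_univ_succ]
  simp only [Fin.val_zero, Nat.mul_zero, Fin.val_succ, Phi_mk_zero, Phi_mk_one,
    Phi_mk_even, Phi_mk_odd, hs, h0]
  rw [Phi_zero, Phi_mk_one]
  ring

lemma Phi_inj (n : ℕ) (j j' : Fin (2 * n + 1)) (τ τ' : Equiv.Perm (Fin (2 * n)))
    (h : Phi n j τ = Phi n j' τ') : j = j' ∧ τ = τ' := by
  have hj : j = j' := by
    have := Phi_one n j τ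
    rw [h, Phi_one] at this
    exact Fin.succ_injective _ this.symm
  subst hj
  refine ⟨rfl, Equiv.ext fun i => ?_⟩
  have := Phi_succ_succ n j τ i
  rw [h, Phi_succ_succ] at this
  exact (Fin.strictMono_succAbove j).injective (Fin.succ_injective _ this.symm)

end QFAux

/-- Pfaffian-type expansion: the recursively defined `quasiFreeE` equals the sum over
all perfect pairings, i.e. permutations `σ` of `{1,…,2n}` with `σ(2k-1) < σ(2k)` and
`σ(1) < σ(3) < ⋯ < σ(2n-1)`, of `sgn(σ) ∏_k θ(f_{σ(2k-1)}, f_{σ(2k)})`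
(written here in 0-based indexing). -/
theorem quasiFreeE_eq_pfaffian {α : Type*} (θ : α → α → ℂ) (n : ℕ) (f : Fin (2 * n) → α) :
    quasiFreeE θ n f =
      ∑ σ ∈ Finset.univ.filter (fun σ : Equiv.Perm (Fin (2 * n)) =>
          (∀ k : Fin n,
            σ ⟨2 * (k : ℕ), by have := k.isLt; omega⟩ <
              σ ⟨2 * (k : ℕ) + 1, by have := k.isLt; omega⟩) ∧
          (∀ k l : Fin n, k < l →
            σ ⟨2 * (k : ℕ), by have := k.isLt; omega⟩ <
              σ ⟨2 * (l : ℕ), by have := l.isLt; omega⟩)),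
        ((Equiv.Perm.sign σ : ℤ) : ℂ) *
          ∏ k : Fin n,
            θ (f (σ ⟨2 * (k : ℕ), by have := k.isLt; omega⟩))
              (f (σ ⟨2 * (k : ℕ) + 1, by have := k.isLt; omega⟩)) := by

  induction n with
  | zero => rw [quasiFreeE]; simp
  | succ n ih =>
    rw [quasiFreeE]
    simp only [ih, Finset.mul_sum]
    rw [← Finset.sum_product']
    refine Finset.sum_bij (fun p _ => Phi n p.1 p.2) ?_ ?_ ?_ ?_
    · rintro ⟨j, τ⟩ hp
      rw [Finset.mem_product, Finset.mem_filter] at hp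
      exact Finset.mem_filter.2 ⟨Finset.mem_univ _, (Phi_mem n j τ).2 hp.2.2⟩
    · rintro ⟨j, τ⟩ hp ⟨j', τ'⟩ hp' h
      obtain ⟨h1, h2⟩ := Phi_inj n j j' τ τ' h
      exact Prod.ext h1 h2
    · intro σ hσ
      rw [Finset.mem_filter] at hσ
      obtain ⟨j, τ, hΦ⟩ := Phi_surj n σ hσ.2
      refine ⟨(j, τ), ?_, hΦ⟩
      rw [Finset.mem_product, Finset.mem_filter]
      exact ⟨Finset.mem_univ _, Finset.mem_univ _, (Phi_mem n j τ).1 (by rw [hΦ]; exact hσ.2)⟩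
    · rintro ⟨j, τ⟩ hp
      exact Phi_term_eq θ n f j τ
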